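/- Two LPMLN programs P and Q are semi-uniformly equivalent (i.e., for every set R of weighted facts, SM(P ∪ R) = SM(Q ∪ R)) if and only if P and Q have the same UE-models. -/

import Mathlib

open scoped Classical

noncomputable section

namespace LPMLN

/-- A ground literal: an atom (numbered by `ℕ`) or its classical negation. -/
inductive Lit where
  | pos : ℕ → Lit
  | neg : ℕ → Lit
deriving DecidableEq

/-- The complementary literal. -/
def Lit.compl : Lit → Lit
  | .pos a => .neg a
  | .neg a => .pos a

/-- A finite set of literals is consistent if it contains no complementary pair. -/
def Consistent (I : Finset Lit) : Prop := ∀ l ∈ I, l.compl ∉ I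

/-- An ASP rule, given by its head, positive body and negative body. -/
structure Rule where
  head : Finset Lit
  pos : Finset Lit
  neg : Finset Lit
deriving DecidableEq

/-- The literals occurring in a rule. -/
def Rule.lits (r : Rule) : Finset Lit := r.head ∪ r.pos ∪ r.neg

/-- Satisfaction of a rule by a set of literals. -/
def Sat (I : Finset Lit) (r : Rule) : Prop :=
  r.pos ⊆ I → r.neg ∩ I = ∅ → (r.head ∩ I).Nonempty

/-- Satisfaction of an ASP program. -/
def SatProg (I : Finset Lit) (prog : Finset Rule) : Prop := ∀ r ∈ prog, Sat I r

/-- The GL-reduct of an ASP program w.r.t. an interpretation. -/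
def glReduct (prog : Finset Rule) (I : Finset Lit) : Finset Rule :=
  (prog.filter fun r => r.neg ∩ I = ∅).image fun r => ⟨r.head, r.pos, ∅⟩

/-- `I` is a stable model of the ASP program `prog`: `I` is a consistent set of
literals satisfying the GL-reduct, no proper subset of which satisfies the GL-reduct. -/
def AspStable (prog : Finset Rule) (I : Finset Lit) : Prop :=
  Consistent I ∧ SatProg I (glReduct prog I) ∧ ∀ J ⊂ I, ¬ SatProg J (glReduct prog I)

/-- A weight: a real number (soft rule) or the symbol `α` (hard rule). -/
inductive Weight where
  | soft : ℝ → Weight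
  | hard : Weight

/-- The real value of a soft weight (hard weights get the dummy value 0). -/
def Weight.val : Weight → ℝ
  | .soft w => w
  | .hard => 0

/-- A weighted rule `w : r`. -/
structure WRule where
  w : Weight
  r : Rule

/-- An LPMLN program: a finite set of weighted rules. -/
abbrev Program := Finset WRule

/-- The LPMLN reduct `P_I`: the rules of `P` satisfied by `I`. -/
def reduct (P : Program) (I : Finset Lit) : Program := P.filter fun wr => Sat I wr.r

/-- The unweighted ASP counterpart of an LPMLN program. -/
def unweighted (P : Program) : Finset Rule := P.image fun wr => wr.r

/-- `I` is a stable model of the LPMLN program `P`: `I` is a stable model of the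
unweighted ASP counterpart of the LPMLN reduct `P_I`. -/
def Stable (P : Program) (I : Finset Lit) : Prop :=
  AspStable (unweighted (reduct P I)) I

/-- The literals occurring in an LPMLN program. -/
def litset (P : Program) : Finset Lit := P.biUnion fun wr => wr.r.lits

/-- `(X, Y)` is an SE-interpretation: a pair of interpretations with `X ⊆ Y`. -/
def SEInterp (X Y : Finset Lit) : Prop := Consistent X ∧ Consistent Y ∧ X ⊆ Y

/-- `(X, Y)` is an SE-model of the LPMLN program `P`: an SE-interpretation such that
`X` satisfies the GL-reduct (w.r.t. `Y`) of the unweighted version of `P_Y`. -/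
def SEModel (P : Program) (X Y : Finset Lit) : Prop :=
  SEInterp X Y ∧ SatProg X (glReduct (unweighted (reduct P Y)) Y)

/-- The number of hard rules of `P` satisfied by `I`. -/
def hardCount (P : Program) (I : Finset Lit) : ℕ :=
  ((reduct P I).filter fun wr => wr.w = Weight.hard).card

/-- The sum of the weights of the soft rules of `P` satisfied by `I`. -/
def softWeight (P : Program) (I : Finset Lit) : ℝ :=
  ∑ wr ∈ ((reduct P I).filter fun wr => wr.w ≠ Weight.hard), wr.w.val

/-- The weight degree `W(P, I) = exp(Σ_{w:r ∈ P_I} w)`, viewed as the real-valued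
function `A ↦ exp(c' + k'·A)` of the value `A` given to the symbol `α`, where `k'` is
the number of hard rules of `P` satisfied by `I` and `c'` the sum of the weights of the
soft rules of `P` satisfied by `I`. -/
def wdeg (P : Program) (I : Finset Lit) (A : ℝ) : ℝ :=
  Real.exp (softWeight P I + A * hardCount P I)

/-- The (finite) set of stable models of `P` (every stable model of `P` is a subset of
`litset P`). -/
def SMset (P : Program) : Finset (Finset Lit) :=
  (litset P).powerset.filter fun I => Stable P I

/-- The probability degree `Pr(P, I)`: the limit, as `α → ∞`, of
`W(P, I) / Σ_{I' ∈ SM(P)} W(P, I')` if `I` is a stable model of `P`, and `0` otherwise. -/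
def PrDeg (P : Program) (I : Finset Lit) : ℝ :=
  if Stable P I then
    Filter.limUnder Filter.atTop fun A => wdeg P I A / ∑ I' ∈ SMset P, wdeg P I' A
  else 0

/-- `I` is a probabilistic stable model of `P`: a stable model of `P` satisfying the
maximum number of hard rules of `P` (equivalently, with nonzero probability degree). -/
def PStable (P : Program) (I : Finset Lit) : Prop :=
  Stable P I ∧ ∀ J, Stable P J → hardCount P J ≤ hardCount P I

/-- Semi-strong equivalence: the extensions by any LPMLN program have the same
stable models. -/
def SemiStrongEq (P Q : Program) : Prop :=
  ∀ R : Program, ∀ I, Stable (P ∪ R) I ↔ Stable (Q ∪ R) I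

/-- p-ordinary equivalence: same stable models and same probability degrees. -/
def POrdEq (P Q : Program) : Prop :=
  (∀ I, Stable P I ↔ Stable Q I) ∧ ∀ I, Stable P I → PrDeg P I = PrDeg Q I

/-- p-strong equivalence: p-ordinary equivalence under every extension. -/
def PStrongEq (P Q : Program) : Prop := ∀ R : Program, POrdEq (P ∪ R) (Q ∪ R)

/-- Comparison of the symbolic weight degrees of two interpretations w.r.t. `P`:
`exp(c + k·α) ≤ exp(c' + k'·α)` iff `k < k'`, or `k = k'` and `c ≤ c'`. -/
def WLe (P : Program) (I J : Finset Lit) : Prop :=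
  hardCount P I < hardCount P J ∨
    (hardCount P I = hardCount P J ∧ softWeight P I ≤ softWeight P J)

/-- q-strong equivalence: same stable models under every extension, with
order-preserving weight degrees. -/
def QStrongEq (P Q : Program) : Prop :=
  ∀ R : Program,
    (∀ I, Stable (P ∪ R) I ↔ Stable (Q ∪ R) I) ∧
    ∀ X Y, Stable (P ∪ R) X → Stable (P ∪ R) Y → (WLe (P ∪ R) X Y ↔ WLe (Q ∪ R) X Y)

/-- A soft stable model of `P`: a stable model of `P` satisfying all hard rules of `P`. -/
def SoftStable (P : Program) (I : Finset Lit) : Prop :=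
  Stable P I ∧ ∀ wr ∈ P, wr.w = Weight.hard → Sat I wr.r

/-- A soft SE-model of `P`: an SE-model `(X, Y)` of `P` such that `Y` satisfies all
hard rules of `P`. -/
def SoftSEModel (P : Program) (X Y : Finset Lit) : Prop :=
  SEModel P X Y ∧ ∀ wr ∈ P, wr.w = Weight.hard → Sat Y wr.r

/-- The (finite) set of soft stable models of `P`. -/
def SSMset (P : Program) : Finset (Finset Lit) :=
  (litset P).powerset.filter fun I => SoftStable P I

/-- The probability degree under the soft stable model semantics:
`Pr_s(P, X) = W_s(P, X) / Σ_{X' ∈ SSM(P)} W_s(P, X')`, where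
`W_s(P, X) = exp(Σ_{w:r ∈ P^s, X ⊨ r} w)`. -/
def PrS (P : Program) (X : Finset Lit) : ℝ :=
  Real.exp (softWeight P X) / ∑ X' ∈ SSMset P, Real.exp (softWeight P X')

/-- sp-strong equivalence: p-strong equivalence under the soft stable model
semantics. -/
def SPStrongEq (P Q : Program) : Prop :=
  ∀ R : Program,
    (∀ I, SoftStable (P ∪ R) I ↔ SoftStable (Q ∪ R) I) ∧
    ∀ X, SoftStable (P ∪ R) X → PrS (P ∪ R) X = PrS (Q ∪ R) X

/-- `(X, Y)` is a UE-model of `P`: an SE-model with `X = Y`, or with `X ⊊ Y` such that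
no `X'` strictly between `X` and `Y` gives an SE-model `(X', Y)`. -/
def UEModel (P : Program) (X Y : Finset Lit) : Prop :=
  SEModel P X Y ∧
    (X = Y ∨ (X ⊂ Y ∧ ∀ X', X ⊂ X' → X' ⊂ Y → ¬ SEModel P X' Y))

/-- A program consisting of weighted facts only (rules with empty bodies). -/
def IsFactProg (R : Program) : Prop := ∀ wr ∈ R, wr.r.pos = ∅ ∧ wr.r.neg = ∅

/-- p-uniform equivalence: p-ordinary equivalence under every extension by a set of
weighted facts. -/
def PUniformEq (P Q : Program) : Prop :=
  ∀ R : Program, IsFactProg R → POrdEq (P ∪ R) (Q ∪ R)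

/-- The flattening rules `R(X, Y, a)`: the two hard rules
`α : ← X, not Y, a` and `α : a ← X, not Y`. -/
def flatten (X Y : Finset Lit) (a : ℕ) : Program :=
  {⟨Weight.hard, ⟨∅, X ∪ {Lit.pos a}, Y⟩⟩, ⟨Weight.hard, ⟨{Lit.pos a}, X, Y⟩⟩}

/-- The hard fact `α : l`. -/
def factOf (l : Lit) : WRule := ⟨Weight.hard, ⟨{l}, ∅, ∅⟩⟩

/-- The base flattening extension `E⁰(P, U) = P ∪ {α : a | a ∈ U}`. -/
def E0 (P : Program) (U : Finset Lit) : Program := P ∪ U.image factOf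

/-- `IsFlatExt P U k E` holds iff `E` is a flattening extension `E^k(P, U)`:
`E⁰(P, U) = P ∪ {α : a | a ∈ U}` and `E^{i+1}(P, U) = E^i(P, U) ∪ R(X ∩ U, U − X, c)`
where `X` is a probabilistic stable model of `E^i(P, U)` and `c` is a fresh atom. -/
inductive IsFlatExt (P : Program) (U : Finset Lit) : ℕ → Program → Prop
  | zero : IsFlatExt P U 0 (E0 P U)
  | succ {i : ℕ} {E : Program} {X : Finset Lit} {c : ℕ} :
      IsFlatExt P U i E → PStable E X →
      Lit.pos c ∉ litset E → Lit.neg c ∉ litset E →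
      IsFlatExt P U (i + 1) (E ∪ flatten (X ∩ U) (U \ X) c)

/-! ### Auxiliary lemmas for STATEMENT 13 -/

/-- The ASP program whose stable-model condition defines `Stable P I`. -/
def gred (P : Program) (I : Finset Lit) : Finset Rule :=
  glReduct (unweighted (reduct P I)) I

lemma mem_gred {P : Program} {I : Finset Lit} {r : Rule} :
    r ∈ gred P I ↔ ∃ wr ∈ P, Sat I wr.r ∧ wr.r.neg ∩ I = ∅ ∧
      r = ⟨wr.r.head, wr.r.pos, ∅⟩ := by
  simp only [gred, glReduct, unweighted, reduct, Finset.mem_image, Finset.mem_filter]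
  constructor
  · rintro ⟨r0, ⟨⟨wr, ⟨hwr, hsat⟩, rfl⟩, hneg⟩, rfl⟩
    exact ⟨wr, hwr, hsat, hneg, rfl⟩
  · rintro ⟨wr, hwr, hsat, hneg, rfl⟩
    exact ⟨wr.r, ⟨⟨wr, ⟨hwr, hsat⟩, rfl⟩, hneg⟩, rfl⟩

lemma satProg_gred_self (P : Program) (I : Finset Lit) : SatProg I (gred P I) := by
  intro r hr
  obtain ⟨wr, _, hsat, hneg, rfl⟩ := mem_gred.mp hr
  intro hpos _
  exact hsat hpos hneg

lemma stable_iff {P : Program} {I : Finset Lit} :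
    Stable P I ↔ Consistent I ∧ ∀ J ⊂ I, ¬ SatProg J (gred P I) :=
  ⟨fun h => ⟨h.1, h.2.2⟩, fun h => ⟨h.1, satProg_gred_self P I, h.2⟩⟩

lemma gred_union {P R : Program} {I : Finset Lit} :
    gred (P ∪ R) I = gred P I ∪ gred R I := by
  ext r
  simp only [mem_gred, Finset.mem_union]
  constructor
  · rintro ⟨wr, hwr | hwr, h⟩
    · exact Or.inl ⟨wr, hwr, h⟩
    · exact Or.inr ⟨wr, hwr, h⟩
  · rintro (⟨wr, hwr, h⟩ | ⟨wr, hwr, h⟩)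
    exacts [⟨wr, Or.inl hwr, h⟩, ⟨wr, Or.inr hwr, h⟩]

lemma satProg_union {J : Finset Lit} {A B : Finset Rule} :
    SatProg J (A ∪ B) ↔ SatProg J A ∧ SatProg J B := by
  simp only [SatProg, Finset.mem_union, or_imp, forall_and]

lemma consistent_mono {J I : Finset Lit} (h : J ⊆ I) (hI : Consistent I) :
    Consistent J := fun l hl hc => hI l (h hl) (h hc)

lemma satProg_gred_mono {R : Program} (hR : IsFactProg R) {I J K : Finset Lit}
    (hJK : J ⊆ K) (h : SatProg J (gred R I)) : SatProg K (gred R I) := by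
  intro r hr
  obtain ⟨wr, hwr, hsat, hneg, rfl⟩ := mem_gred.mp hr
  obtain ⟨hp, hn⟩ := hR wr hwr
  intro _ _
  obtain ⟨x, hx⟩ := h _ hr (by simp [hp]) (by simp)
  obtain ⟨hx1, hx2⟩ := Finset.mem_inter.mp hx
  exact ⟨x, Finset.mem_inter.mpr ⟨hx1, hJK hx2⟩⟩

lemma isFactProg_image (Z : Finset Lit) : IsFactProg (Z.image factOf) := by
  intro wr hwr
  obtain ⟨l, _, rfl⟩ := Finset.mem_image.mp hwr
  exact ⟨rfl, rfl⟩

lemma satProg_gred_facts {Z I J : Finset Lit} (hZ : Z ⊆ I) :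
    SatProg J (gred (Z.image factOf) I) ↔ Z ⊆ J := by
  constructor
  · intro h l hl
    have hmem : (⟨{l}, ∅, ∅⟩ : Rule) ∈ gred (Z.image factOf) I := by
      refine mem_gred.mpr ⟨factOf l, Finset.mem_image_of_mem _ hl, ?_, ?_, rfl⟩
      · intro _ _
        exact ⟨l, Finset.mem_inter.mpr ⟨Finset.mem_singleton_self l, hZ hl⟩⟩
      · simp [factOf]
    obtain ⟨x, hx⟩ := h _ hmem (Finset.empty_subset _) (by simp)
    obtain ⟨hx1, hx2⟩ := Finset.mem_inter.mp hx
    exact Finset.mem_singleton.mp hx1 ▸ hx2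
  · intro hZJ r hr
    obtain ⟨wr, hwr, _, _, rfl⟩ := mem_gred.mp hr
    obtain ⟨l, hl, rfl⟩ := Finset.mem_image.mp hwr
    intro _ _
    exact ⟨l, Finset.mem_inter.mpr ⟨Finset.mem_singleton_self l, hZJ hl⟩⟩

lemma not_stable_elim {P : Program} {Z I : Finset Lit} (hC : Consistent I) (hZ : Z ⊆ I)
    (h : ¬ Stable (P ∪ Z.image factOf) I) :
    ∃ J, J ⊂ I ∧ SatProg J (gred P I) ∧ Z ⊆ J := by
  rw [stable_iff] at h
  push_neg at h
  obtain ⟨J, hJ, hsat⟩ := h hC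
  rw [gred_union, satProg_union, satProg_gred_facts hZ] at hsat
  exact ⟨J, hJ, hsat.1, hsat.2⟩

lemma not_stable_facts {Q : Program} {Z I : Finset Lit} (hZI : Z ⊂ I)
    (hsat : SatProg Z (gred Q I)) : ¬ Stable (Q ∪ Z.image factOf) I := by
  rw [stable_iff]
  rintro ⟨-, hmin⟩
  refine hmin Z hZI ?_
  rw [gred_union, satProg_union, satProg_gred_facts hZI.subset]
  exact ⟨hsat, subset_rfl⟩

lemma no_middle {P Q : Program}
    (hU : ∀ R : Program, IsFactProg R → ∀ I, Stable (P ∪ R) I ↔ Stable (Q ∪ R) I)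
    {X Y : Finset Lit} (hUE : UEModel P X Y) (hXY : X ⊂ Y)
    {Z : Finset Lit} (hXZ : X ⊂ Z) (hZY : Z ⊂ Y) (hSE : SEModel Q Z Y) : False := by
  have hCY : Consistent Y := hUE.1.1.2.1
  have hnotQ : ¬ Stable (Q ∪ Z.image factOf) Y := not_stable_facts hZY hSE.2
  have hnotP : ¬ Stable (P ∪ Z.image factOf) Y := by
    rw [hU _ (isFactProg_image Z) Y]; exact hnotQ
  obtain ⟨L, hLY, hLsat, hZL⟩ := not_stable_elim hCY hZY.subset hnotP
  have hmax := hUE.2.resolve_left hXY.ne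
  exact hmax.2 L (lt_of_lt_of_le hXZ hZL) hLY
    ⟨⟨consistent_mono hLY.subset hCY, hCY, hLY.subset⟩, hLsat⟩

lemma ue_of_semiUniform {P Q : Program}
    (hU : ∀ R : Program, IsFactProg R → ∀ I, Stable (P ∪ R) I ↔ Stable (Q ∪ R) I)
    {X Y : Finset Lit} (hUE : UEModel P X Y) : UEModel Q X Y := by
  have hCX : Consistent X := hUE.1.1.1
  have hCY : Consistent Y := hUE.1.1.2.1
  have hXY : X ⊆ Y := hUE.1.1.2.2
  have hsatP : SatProg X (gred P Y) := hUE.1.2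
  by_cases hxy : X = Y
  · subst hxy
    exact ⟨⟨⟨hCX, hCY, hXY⟩, satProg_gred_self Q X⟩, Or.inl rfl⟩
  · have hss : X ⊂ Y := hXY.ssubset_of_ne hxy
    have hnotP : ¬ Stable (P ∪ X.image factOf) Y := not_stable_facts hss hsatP
    have hnotQ : ¬ Stable (Q ∪ X.image factOf) Y := by
      rw [← hU _ (isFactProg_image X) Y]; exact hnotP
    obtain ⟨J, hJY, hJsat, hXJ⟩ := not_stable_elim hCY hss.subset hnotQ
    have hJX : J = X := by
      by_contra hne
      exact no_middle hU hUE hss (hXJ.ssubset_of_ne (Ne.symm hne)) hJY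
        ⟨⟨consistent_mono hJY.subset hCY, hCY, hJY.subset⟩, hJsat⟩
    exact ⟨⟨⟨hCX, hCY, hXY⟩, hJX ▸ hJsat⟩,
      Or.inr ⟨hss, fun X' h1 h2 hSE => no_middle hU hUE hss h1 h2 hSE⟩⟩

lemma stable_of_ue {P Q : Program}
    (hE : ∀ X Y, UEModel Q X Y → UEModel P X Y)
    {R : Program} (hR : IsFactProg R) {I : Finset Lit}
    (hst : Stable (P ∪ R) I) : Stable (Q ∪ R) I := by
  have hCI : Consistent I := (stable_iff.mp hst).1
  have hmin := (stable_iff.mp hst).2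
  rw [stable_iff]
  refine ⟨hCI, fun J hJ hsat => ?_⟩
  rw [gred_union, satProg_union] at hsat
  obtain ⟨hQ, hRs⟩ := hsat
  set S : Finset (Finset Lit) :=
    I.powerset.filter (fun W => J ⊆ W ∧ W ⊂ I ∧ SatProg W (gred Q I)) with hS
  have hJS : J ∈ S := by
    simp only [hS, Finset.mem_filter, Finset.mem_powerset]
    exact ⟨hJ.subset, subset_rfl, hJ, hQ⟩
  obtain ⟨K, hKS, hKmax⟩ := S.exists_max_image Finset.card ⟨J, hJS⟩
  simp only [hS, Finset.mem_filter, Finset.mem_powerset] at hKS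
  obtain ⟨hKI, hJK, hKI', hKsat⟩ := hKS
  have hUEQ : UEModel Q K I := by
    refine ⟨⟨⟨consistent_mono hKI hCI, hCI, hKI⟩, hKsat⟩,
      Or.inr ⟨hKI', fun X' h1 h2 hSE => ?_⟩⟩
    have hX'S : X' ∈ S := by
      simp only [hS, Finset.mem_filter, Finset.mem_powerset]
      exact ⟨h2.subset, hJK.trans h1.subset, h2, hSE.2⟩
    exact absurd (hKmax X' hX'S) (not_le.mpr (Finset.card_lt_card h1))
  have hUEP := hE K I hUEQ
  have hPsat : SatProg K (gred P I) := hUEP.1.2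
  have hRsat : SatProg K (gred R I) := satProg_gred_mono hR hJK hRs
  refine hmin K hKI' ?_
  rw [gred_union, satProg_union]
  exact ⟨hPsat, hRsat⟩

/-- Two LPMLN programs `P` and `Q` are semi-uniformly equivalent (i.e.,
for every set `R` of weighted facts, `SM(P ∪ R) = SM(Q ∪ R)`) if and only if `P` and
`Q` have the same UE-models. -/
theorem semiUniformEq_iff_same_UEModels (P Q : Program) :
    (∀ R : Program, IsFactProg R → ∀ I, Stable (P ∪ R) I ↔ Stable (Q ∪ R) I) ↔
      (∀ X Y, UEModel P X Y ↔ UEModel Q X Y) := by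
  constructor
  · intro hU X Y
    exact ⟨ue_of_semiUniform hU, ue_of_semiUniform (fun R hR I => (hU R hR I).symm)⟩
  · intro hE R hR I
    exact ⟨stable_of_ue (fun X Y h => (hE X Y).mpr h) hR,
           stable_of_ue (fun X Y h => (hE X Y).mp h) hR⟩

end LPMLN
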